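/- arXiv:0712.3766 — 2 statements merged into one kernel-verified Lean document; each statement's English description precedes it below -/
import Mathlib

section
/- Let f satisfy the concave-convex conditions: u f''(u) > 0 for all u ≠ 0, f'''(0) ≠ 0, and f'(u) → +∞ as |u| → +∞. Then for each u > 0 there exists a unique v < 0 with f'(v) = (f(u) - f(v))/(u - v), i.e., the tangent function φ^♮ is well defined on positive reals with negative values. -/
open Set Filter

/-- For a concave-convex flux `f` (`u f''(u) > 0` for `u ≠ 0`, `f'''(0) ≠ 0`,
`f'(u) → +∞` as `|u| → ∞`), for each `u > 0` there is a unique `v < 0` with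
`f'(v) = (f u - f v)/(u - v)`: the tangent function `φ♮` is well defined on
positive reals with negative values. -/
theorem tangent_function_well_defined
    (f : ℝ → ℝ) (hf : ContDiff ℝ 3 f)
    (hconv : ∀ u : ℝ, u ≠ 0 → u * deriv (deriv f) u > 0)
    (h3 : deriv (deriv (deriv f)) 0 ≠ 0)
    (htop : Filter.Tendsto (deriv f) Filter.atTop Filter.atTop)
    (hbot : Filter.Tendsto (deriv f) Filter.atBot Filter.atTop) :
    ∀ u : ℝ, 0 < u →
      ∃! v : ℝ, v < 0 ∧ deriv f v = (f u - f v) / (u - v) := by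
  have hf1 : Differentiable ℝ f := hf.differentiable (by norm_num)
  have hf' : ContDiff ℝ 2 (deriv f) := by
    have h : ContDiff ℝ ((2 : ℕ) + 1) f := by exact_mod_cast hf
    exact (contDiff_succ_iff_deriv.mp h).2.2
  have hf2 : Differentiable ℝ (deriv f) := hf'.differentiable (by norm_num)
  have hf'' : ContDiff ℝ 1 (deriv (deriv f)) := by
    have h : ContDiff ℝ ((1 : ℕ) + 1) (deriv f) := by exact_mod_cast hf'
    exact (contDiff_succ_iff_deriv.mp h).2.2
  have hc2 : Continuous (deriv (deriv f)) := hf''.continuous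
  have hfpp_neg : ∀ v : ℝ, v < 0 → deriv (deriv f) v < 0 := by
    intro v hv; nlinarith [hconv v (ne_of_lt hv)]
  have hfpp_pos : ∀ v : ℝ, 0 < v → 0 < deriv (deriv f) v := by
    intro v hv; nlinarith [hconv v (ne_of_gt hv)]
  -- f' strictly monotone on each side
  have hmono' : StrictMonoOn (deriv f) (Ici 0) :=
    strictMonoOn_of_deriv_pos (convex_Ici 0) hf'.continuous.continuousOn
      (fun v hv => by rw [interior_Ici] at hv; exact hfpp_pos v hv)
  have hanti : StrictAntiOn (deriv f) (Iic 0) :=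
    strictAntiOn_of_deriv_neg (convex_Iic 0) hf'.continuous.continuousOn
      (fun v hv => by rw [interior_Iic] at hv; exact hfpp_neg v hv)
  intro u hu
  set g : ℝ → ℝ := fun v => f u - f v - deriv f v * (u - v) with hgdef
  have hgderiv : ∀ v : ℝ, HasDerivAt g (-(deriv (deriv f) v * (u - v))) v := by
    intro v
    have h1 : HasDerivAt f (deriv f v) v := (hf1 v).hasDerivAt
    have h2 : HasDerivAt (deriv f) (deriv (deriv f) v) v := (hf2 v).hasDerivAt
    have h3' : HasDerivAt (fun w : ℝ => u - w) (-1) v := by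
      simpa using (hasDerivAt_id v).const_sub u
    have := (h1.const_sub (f u)).sub (h2.mul h3')
    exact this.congr_deriv (by ring)
  have hgc : Continuous g :=
    (continuous_const.sub hf1.continuous).sub
      (hf'.continuous.mul (continuous_const.sub continuous_id))
  have hmono : StrictMonoOn g (Iic 0) :=
    strictMonoOn_of_deriv_pos (convex_Iic 0) hgc.continuousOn (fun v hv => by
      rw [interior_Iic] at hv
      rw [(hgderiv v).deriv]
      have h1 := hfpp_neg v hv
      have h2 : v < 0 := hv
      nlinarith)
  -- g 0 > 0
  have hg0 : 0 < g 0 := by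
    obtain ⟨c, hc, hceq⟩ := exists_deriv_eq_slope f hu hf1.continuous.continuousOn
      hf1.differentiableOn
    have hlt : deriv f 0 < deriv f c :=
      hmono' (mem_Ici.mpr (le_refl 0)) (show c ∈ Ici 0 from le_of_lt hc.1) hc.1
    have : f u - f 0 = deriv f c * u := by
      rw [sub_zero, eq_div_iff hu.ne'] at hceq; linarith [hceq]
    simp only [hgdef]
    nlinarith
  -- choose v₀ far left with g v₀ < 0
  obtain ⟨v₀, hv₀⟩ := ((hbot.eventually (eventually_gt_atTop ((f u - f 0) / u))).and
    (eventually_lt_atBot 0)).exists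
  obtain ⟨hv₀slope, hv₀neg⟩ := hv₀
  have hgv₀ : g v₀ < 0 := by
    obtain ⟨c, hc, hceq⟩ := exists_deriv_eq_slope f hv₀neg hf1.continuous.continuousOn
      hf1.differentiableOn
    have hlt : deriv f c < deriv f v₀ :=
      hanti (le_of_lt hv₀neg) (le_of_lt hc.2) hc.1
    have h1 : f 0 - f v₀ = deriv f c * (0 - v₀) := by
      rw [eq_div_iff (by linarith : (0:ℝ) - v₀ ≠ 0)] at hceq; linarith
    have h2 : (f u - f 0) / u < deriv f v₀ := hv₀slope
    have h3 : f u - f 0 < deriv f v₀ * u := by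
      rw [div_lt_iff₀ hu] at h2; linarith
    simp only [hgdef]
    nlinarith
  -- IVT
  have hmem : (0 : ℝ) ∈ Icc (g v₀) (g 0) := ⟨le_of_lt hgv₀, le_of_lt hg0⟩
  obtain ⟨v, hvmem, hveq⟩ :=
    intermediate_value_Icc (le_of_lt hv₀neg) hgc.continuousOn hmem
  have hvne : v ≠ 0 := by
    intro h; rw [h] at hveq; exact absurd hveq (ne_of_lt hg0).symm
  have hvneg : v < 0 := lt_of_le_of_ne hvmem.2 hvne
  -- convert g v = 0 to slope equation
  have key : ∀ w : ℝ, w < 0 → ((deriv f w = (f u - f w) / (u - w)) ↔ g w = 0) := by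
    intro w hw
    constructor
    · intro h; simp only [hgdef]
      rw [eq_div_iff (by linarith : u - w ≠ 0)] at h; linarith
    · intro h; simp only [hgdef] at h
      rw [eq_div_iff (by linarith : u - w ≠ 0)]; linarith
  refine ⟨v, ⟨hvneg, (key v hvneg).mpr hveq⟩, ?_⟩
  rintro w ⟨hwneg, hweq⟩
  exact hmono.injOn (le_of_lt hwneg) (le_of_lt hvneg)
    (((key w hwneg).mp hweq).trans hveq.symm)
end

section
/- Exactness of the reconstruction scheme flux for a traveling discontinuity: let u_l ≠ u_r, σ = (f(u_r)-f(u_l))/(u_r-u_l) > 0, 0 ≤ d ≤ 1, Δt_* = (1-d)Δx/σ, and define the flux F = [min(Δt_*, Δt) f(u_r) + max(Δt - Δt_*, 0) f(u_l)]/Δt. Then Δt·F equals the exact time-integral of f(u(x_{+}, t)) over [0, Δt] for the exact traveling-wave solution u(x,t) = u_l for x - x_- < dΔx + σt, u_r otherwise, evaluated at the right cell edge x_+ = x_- + Δx, provided σΔt ≤ Δx. -/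
/-- Exactness of the reconstruction scheme flux for a traveling discontinuity: with
a discontinuity at `x̄ = x₋ + d Δx` (`0 ≤ d ≤ 1`), left state `u_l`, right state
`u_r`, speed `σ > 0`, `Δt_* = (1-d)Δx/σ`, and `σ Δt ≤ Δx`, the flux
`Δt F = min(Δt_*, Δt) f(u_r) + max(Δt - Δt_*, 0) f(u_l)` equals the exact
time-integral of `f(u(x₊, t))` over `[0, Δt]` for the traveling-wave solution. -/
theorem reconstruction_flux_exact_traveling_wave
    (f : ℝ → ℝ) (ul ur xm Δx Δt σ d : ℝ)
    (hne : ul ≠ ur) (hΔx : 0 < Δx) (hΔt : 0 < Δt) (hσ : 0 < σ)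
    (hd : 0 ≤ d ∧ d ≤ 1) (hCFL : σ * Δt ≤ Δx)
    (Δtstar : ℝ) (hstar : Δtstar = (1 - d) * Δx / σ)
    (u : ℝ → ℝ → ℝ)
    (husol : ∀ x t : ℝ, u x t = if x - xm < d * Δx + σ * t then ul else ur) :
    (∫ t in (0 : ℝ)..Δt, f (u (xm + Δx) t))
      = min Δtstar Δt * f ur + max (Δt - Δtstar) 0 * f ul := by
  have hts : 0 ≤ Δtstar := by
    rw [hstar]
    exact div_nonneg (mul_nonneg (by linarith [hd.2]) hΔx.le) hσ.le
  have hcongr : ∀ t : ℝ, f (u (xm + Δx) t) = if Δtstar < t then f ul else f ur := by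
    intro t
    by_cases hc : Δtstar < t
    · have h1 : Δx < d * Δx + σ * t := by
        rw [hstar, div_lt_iff₀ hσ] at hc; nlinarith
      simp [husol, h1, hc]
    · have h1 : ¬(Δx < d * Δx + σ * t) := by
        push_neg at hc ⊢
        rw [hstar, le_div_iff₀ hσ] at hc; nlinarith
      simp [husol, h1, hc]
  rw [intervalIntegral.integral_congr (fun t _ => hcongr t)]
  have hint : ∀ a b : ℝ, IntervalIntegrable
      (fun t => if Δtstar < t then f ul else f ur) MeasureTheory.volume a b := by
    intro a b
    rw [intervalIntegrable_iff]
    apply MeasureTheory.Integrable.mono'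
      (g := fun _ => max ‖f ul‖ ‖f ur‖) ((MeasureTheory.integrableOn_const_iff (C := max ‖f ul‖ ‖f ur‖)).mpr (Or.inr (by
        rw [Set.uIoc]; exact measure_Ioc_lt_top)))
    · exact ((measurable_const.ite measurableSet_Ioi measurable_const).aestronglyMeasurable).restrict
    · filter_upwards with t
      by_cases hc : Δtstar < t <;> simp [hc, le_max_left, le_max_right]
  rcases le_or_gt Δt Δtstar with h | h
  · have heq : (∫ t in (0:ℝ)..Δt, if Δtstar < t then f ul else f ur)
        = ∫ _t in (0:ℝ)..Δt, f ur := by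
      apply intervalIntegral.integral_congr
      intro t ht
      rw [Set.uIcc_of_le hΔt.le] at ht
      exact if_neg (not_lt.mpr (ht.2.trans h))
    rw [heq, intervalIntegral.integral_const, min_eq_right h,
      max_eq_right (by linarith : Δt - Δtstar ≤ 0)]
    simp [smul_eq_mul]
  · have hsplit := intervalIntegral.integral_add_adjacent_intervals
      (hint 0 Δtstar) (hint Δtstar Δt)
    rw [← hsplit]
    have h1 : (∫ t in (0:ℝ)..Δtstar, if Δtstar < t then f ul else f ur)
        = ∫ _t in (0:ℝ)..Δtstar, f ur := by
      apply intervalIntegral.integral_congr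
      intro t ht
      rw [Set.uIcc_of_le hts] at ht
      exact if_neg (not_lt.mpr ht.2)
    have h2 : (∫ t in Δtstar..Δt, if Δtstar < t then f ul else f ur)
        = ∫ _t in Δtstar..Δt, f ul := by
      apply intervalIntegral.integral_congr_ae
      filter_upwards with t ht
      rw [Set.uIoc_of_le h.le] at ht
      exact if_pos ht.1
    rw [h1, h2, intervalIntegral.integral_const, intervalIntegral.integral_const,
      min_eq_left h.le, max_eq_left (by linarith : (0:ℝ) ≤ Δt - Δtstar)]
    simp [smul_eq_mul]
end
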